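/- For p = 2, the constant κ_{d,p,α} defined by -(π^{(d-1)/2}Γ((1+α)/2)/Γ((α+d)/2))·(B((α-1)/2+1,-α) + B(α-(α-1)/2,-α) + 1/α) coincides with the Bogdan–Dyda constant κ_{d,α} = (π^{(d-1)/2}Γ((1+α)/2)/Γ((α+d)/2))·(B((1+α)/2,(2-α)/2) - 2^α)/(α·2^α), for α ∈ (0,2), α ≠ 1. -/

import Mathlib

open Real

noncomputable def Bet (x y : ℝ) : ℝ := Real.Gamma x * Real.Gamma y / Real.Gamma (x + y)

noncomputable def kappa (d : ℕ) (p α : ℝ) : ℝ :=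
  -(Real.pi ^ (((d : ℝ) - 1) / 2) * Real.Gamma ((1 + α) / 2) / Real.Gamma ((α + d) / 2)) *
    (Bet ((α - 1) / p + 1) (-α) + Bet (α - (α - 1) / p) (-α) + 1 / α)

theorem kappa_two_eq_BogdanDyda (d : ℕ) (hd : 1 ≤ d) (α : ℝ) (hα : α ∈ Set.Ioo (0:ℝ) 2)
    (hα1 : α ≠ 1) :
    kappa d 2 α =
      Real.pi ^ (((d : ℝ) - 1) / 2) * Real.Gamma ((1 + α) / 2) / Real.Gamma ((α + d) / 2) *
        ((Bet ((1 + α) / 2) ((2 - α) / 2) - 2 ^ α) / (α * 2 ^ α)) := by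
  obtain ⟨hα0, hα2⟩ := hα
  have hαne : α ≠ 0 := ne_of_gt hα0
  -- rewrite the two Bet arguments to (1+α)/2
  have e1 : (α - 1) / 2 + 1 = (1 + α) / 2 := by ring
  have e2 : α - (α - 1) / 2 = (1 + α) / 2 := by ring
  rw [kappa, e1, e2]
  -- abbreviations
  have harg1 : (1 + α) / 2 + -α = (1 - α) / 2 := by ring
  have harg2 : (1 + α) / 2 + (2 - α) / 2 = 3 / 2 := by ring
  rw [Bet, Bet, harg1, harg2]
  -- Gamma(3/2) = sqrt(pi) / 2
  have hG32 : Real.Gamma (3 / 2) = Real.sqrt π / 2 := by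
    have : (3 / 2 : ℝ) = 1 / 2 + 1 := by norm_num
    rw [this, Real.Gamma_add_one (by norm_num), Real.Gamma_one_half_eq]; ring
  -- Gamma(1-α) = -α * Gamma(-α)
  have hG1a : Real.Gamma (1 - α) = -α * Real.Gamma (-α) := by
    have := Real.Gamma_add_one (s := -α) (by simpa using hαne)
    rw [show -α + 1 = 1 - α by ring] at this
    exact this
  -- duplication formula at s = (1-α)/2
  have hdup := Real.Gamma_mul_Gamma_add_half ((1 - α) / 2)
  rw [show (1 - α) / 2 + 1 / 2 = (2 - α) / 2 by ring,
      show 2 * ((1 - α) / 2) = 1 - α by ring,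
      show 1 - (1 - α) = α by ring, hG1a] at hdup
  -- nonvanishing facts
  have hGa : Real.Gamma ((1 + α) / 2) ≠ 0 := ne_of_gt (Real.Gamma_pos_of_pos (by linarith))
  have hGs : Real.Gamma ((1 - α) / 2) ≠ 0 := by
    apply Real.Gamma_ne_zero
    intro m
    rcases m with _ | m
    · simp; intro h; apply hα1; linarith
    · push_cast
      intro h
      have : (1 - α) / 2 > -1 := by linarith
      have : -((m:ℝ) + 1) ≤ -1 := by
        have : (0:ℝ) ≤ m := Nat.cast_nonneg m
        linarith
      linarith
  have hGma : Real.Gamma (-α) ≠ 0 := by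
    apply Real.Gamma_ne_zero
    intro m
    rcases m with _ | m
    · simpa using hαne
    rcases m with _ | m
    · push_cast; intro h; apply hα1; linarith
    · push_cast
      intro h
      have : (0:ℝ) ≤ m := Nat.cast_nonneg m
      linarith
  have hsp : Real.sqrt π ≠ 0 := ne_of_gt (Real.sqrt_pos.mpr Real.pi_pos)
  have h2a : (2:ℝ) ^ α ≠ 0 := ne_of_gt (Real.rpow_pos_of_pos (by norm_num) α)
  have key : -(Real.Gamma ((1 + α) / 2) * Real.Gamma (-α) / Real.Gamma ((1 - α) / 2) +
      Real.Gamma ((1 + α) / 2) * Real.Gamma (-α) / Real.Gamma ((1 - α) / 2) + 1 / α) =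
      (Real.Gamma ((1 + α) / 2) * Real.Gamma ((2 - α) / 2) / Real.Gamma (3 / 2) - 2 ^ α) /
        (α * 2 ^ α) := by
    rw [hG32]
    field_simp
    linear_combination (-2 * Real.Gamma ((1 + α) / 2)) * hdup
  rw [← key]
  ring
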